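/- For all a ≥ 2, b ≥ 0, c ≥ 2, the Toads and Frogs position L T^a □ F (TF)^b T F^c R (with L any {T,F}-string ending in F, R any {T,F}-string starting with T) has game value { { a−2 | O^{b+1}( L T^{a−1} F (TF)^{b+1} T □ F^{c−1} R ) } | 0 }, where O(x) = {0 | x}. -/

import Mathlib

universe u

/-- Pre-games (removed from Mathlib; restored with the old definition). -/
inductive SetTheory.PGame : Type (u + 1)
  | mk : ∀ α β : Type u, (α → SetTheory.PGame) → (β → SetTheory.PGame) → SetTheory.PGame

namespace SetTheory.PGame

instance : Zero PGame :=
  ⟨⟨PEmpty, PEmpty, PEmpty.elim, PEmpty.elim⟩⟩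

/-- Negation of pre-games. -/
def neg : PGame → PGame
  | ⟨l, r, L, R⟩ => ⟨r, l, fun i => neg (R i), fun i => neg (L i)⟩

instance : Neg PGame :=
  ⟨neg⟩

/-- The pair (`x ≤ y`, `x ⧏ y`), defined by simultaneous recursion. -/
noncomputable def leLF (x : PGame) : PGame → Prop × Prop :=
  PGame.rec (motive := fun _ => PGame → Prop × Prop)
    (fun xl xr xL xR ihL ihR y =>
      PGame.rec (motive := fun _ => Prop × Prop)
        (fun yl yr yL yR jL jR =>
          ((∀ i, (ihL i (mk yl yr yL yR)).2) ∧ ∀ j, (jR j).2,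
           (∃ i, (jL i).1) ∨ ∃ j, (ihR j (mk yl yr yL yR)).1)) y) x

noncomputable instance : LE PGame :=
  ⟨fun x y => (leLF x y).1⟩

/-- Equivalence of pre-games: `x ≤ y ∧ y ≤ x`. -/
def Equiv (x y : PGame) : Prop :=
  x ≤ y ∧ y ≤ x

instance : HasEquiv PGame :=
  ⟨Equiv⟩

end SetTheory.PGame

open SetTheory

inductive Cell : Type
  | T | F | E
deriving DecidableEq

/-- Positions reachable from `l` by a single Toad (Left) move:
a Toad steps right into an empty square, or jumps over one adjacent Frog
into the empty square beyond. -/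
def toadMoves : List Cell → List (List Cell)
  | [] => []
  | c :: rest =>
    (match c, rest with
     | Cell.T, Cell.E :: r => [Cell.E :: Cell.T :: r]
     | Cell.T, Cell.F :: Cell.E :: r => [Cell.E :: Cell.F :: Cell.T :: r]
     | _, _ => []) ++ (toadMoves rest).map (c :: ·)

/-- Positions reachable from `l` by a single Frog (Right) move. -/
def frogMoves : List Cell → List (List Cell)
  | [] => []
  | c :: rest =>
    (match c, rest with
     | Cell.E, Cell.F :: r => [Cell.F :: Cell.E :: r]
     | Cell.E, Cell.T :: Cell.F :: r => [Cell.F :: Cell.T :: Cell.E :: r]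
     | _, _ => []) ++ (frogMoves rest).map (c :: ·)

/-- A weight which strictly decreases with every legal move: each Toad
contributes the number of squares strictly to its right, each Frog the number
of squares strictly to its left. -/
def wt : List Cell → ℕ
  | [] => 0
  | c :: rest =>
    (if c = Cell.T then rest.length else 0) + rest.countP (· = Cell.F) + wt rest

/-- Game tree with fuel; since `wt` strictly decreases along moves and
positions of weight `0` have no moves, `gameAux n l` is the true game
tree of `l` whenever `wt l ≤ n`. -/
def gameAux : ℕ → List Cell → PGame
  | 0, _ => 0
  | n + 1, l =>
    PGame.mk {m // m ∈ toadMoves l} {m // m ∈ frogMoves l}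
      (fun m => gameAux n m.1) (fun m => gameAux n m.1)

/-- The game (PGame) associated to a Toads and Frogs position. -/
def tfGame (l : List Cell) : PGame := gameAux (wt l + 1) l

/-- The game `{x | y}` with a single Left option `x` and single Right option `y`. -/
def gmk (x y : PGame) : PGame :=
  PGame.mk PUnit PUnit (fun _ => x) (fun _ => y)

/-- The canonical game of a natural number. -/
def natGame : ℕ → PGame
  | 0 => 0
  | n + 1 => PGame.mk PUnit PEmpty (fun _ => natGame n) (fun x => x.elim)

/-- The canonical game of an integer. -/
def intGame : ℤ → PGame
  | Int.ofNat n => natGame n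
  | Int.negSucc n => -natGame (n + 1)

/-- `(TF)^b` : the block `TF` repeated `b` times. -/
def tfBlock (b : ℕ) : List Cell := (List.replicate b [Cell.T, Cell.F]).flatten

namespace SetTheory.PGame

def LeftMoves : PGame → Type u
  | mk l _ _ _ => l

def RightMoves : PGame → Type u
  | mk _ r _ _ => r

def moveLeft : ∀ g : PGame, LeftMoves g → PGame
  | mk _ _ L _ => L

def moveRight : ∀ g : PGame, RightMoves g → PGame
  | mk _ _ _ R => R

def LF (x y : PGame.{u}) : Prop := (leLF x y).2

infix:50 " ⧏ " => LF

theorem le_iff_forall_lf {x y : PGame} :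
    x ≤ y ↔ (∀ i, x.moveLeft i ⧏ y) ∧ ∀ j, x ⧏ y.moveRight j := by
  cases x; cases y; exact Iff.rfl

theorem lf_iff_exists_le {x y : PGame} :
    x ⧏ y ↔ (∃ i, x ≤ y.moveLeft i) ∨ ∃ j, x.moveRight j ≤ y := by
  cases x; cases y; exact Iff.rfl

theorem le_zero {x : PGame} : x ≤ 0 ↔ ∀ i, ∃ j, (x.moveLeft i).moveRight j ≤ 0 := by
  rw [le_iff_forall_lf]
  constructor
  · rintro ⟨h, -⟩ i
    rcases lf_iff_exists_le.1 (h i) with ⟨⟨⟩, _⟩ | h'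
    exact h'
  · intro h
    exact ⟨fun i => lf_iff_exists_le.2 (Or.inr (h i)), fun j => by rcases j with ⟨⟩⟩

theorem zero_le {x : PGame} : 0 ≤ x ↔ ∀ j, ∃ i, 0 ≤ (x.moveRight j).moveLeft i := by
  rw [le_iff_forall_lf]
  constructor
  · rintro ⟨-, h⟩ j
    rcases lf_iff_exists_le.1 (h j) with h' | ⟨⟨⟩, _⟩
    exact h'
  · intro h
    exact ⟨fun i => by rcases i with ⟨⟩, fun j => lf_iff_exists_le.2 (Or.inl (h j))⟩

theorem pg_le_refl : ∀ x : PGame, x ≤ x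
  | mk _ _ L R => by
    rw [le_iff_forall_lf]
    exact ⟨fun i => lf_iff_exists_le.2 (Or.inl ⟨i, pg_le_refl (L i)⟩),
      fun j => lf_iff_exists_le.2 (Or.inr ⟨j, pg_le_refl (R j)⟩)⟩

theorem equiv_rfl {x : PGame} : x ≈ x := ⟨pg_le_refl x, pg_le_refl x⟩

theorem Equiv.of_exists {x y : PGame}
    (hl₁ : ∀ i, ∃ j, x.moveLeft i ≈ y.moveLeft j) (hr₁ : ∀ i, ∃ j, x.moveRight i ≈ y.moveRight j)
    (hl₂ : ∀ j, ∃ i, x.moveLeft i ≈ y.moveLeft j) (hr₂ : ∀ j, ∃ i, x.moveRight i ≈ y.moveRight j) :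
    x ≈ y := by
  constructor
  · rw [le_iff_forall_lf]; constructor
    · intro i; obtain ⟨j, hj⟩ := hl₁ i; exact lf_iff_exists_le.2 (Or.inl ⟨j, hj.1⟩)
    · intro j; obtain ⟨i, hi⟩ := hr₂ j; exact lf_iff_exists_le.2 (Or.inr ⟨i, hi.1⟩)
  · rw [le_iff_forall_lf]; constructor
    · intro j; obtain ⟨i, hi⟩ := hl₂ j; exact lf_iff_exists_le.2 (Or.inl ⟨i, hi.2⟩)
    · intro i; obtain ⟨j, hj⟩ := hr₁ i; exact lf_iff_exists_le.2 (Or.inr ⟨j, hj.2⟩)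

end SetTheory.PGame

section Infra
open Cell PGame

theorem toad_nil {l : List Cell} (h : Cell.E ∉ l) : toadMoves l = [] := by
  induction l with
  | nil => rfl
  | cons c r ih =>
    have hr := ih (fun hr => h (List.mem_cons_of_mem _ hr))
    rw [toadMoves, hr]
    · simp
    · rintro r1 rfl rfl; exact h (by simp)
    · rintro r1 rfl rfl; exact h (by simp)

theorem frog_nil {l : List Cell} (h : Cell.E ∉ l) : frogMoves l = [] := by
  induction l with
  | nil => rfl
  | cons c r ih =>
    have hr := ih (fun hr => h (List.mem_cons_of_mem _ hr))
    rw [frogMoves, hr]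
    · simp
    · rintro r1 rfl rfl; exact h (by simp)
    · rintro r1 rfl rfl; exact h (by simp)

end Infra
/-- Toad moves of `u ++ E :: v`, computed from `u.reverse`. -/
def tmAtR : List Cell → List Cell → List (List Cell)
  | Cell.T :: p, v => [p.reverse ++ Cell.E :: Cell.T :: v]
  | Cell.F :: Cell.T :: p, v => [p.reverse ++ Cell.E :: Cell.F :: Cell.T :: v]
  | _, _ => []

def tmAt (u v : List Cell) : List (List Cell) := tmAtR u.reverse v

/-- Frog moves of `u ++ E :: v`, computed from `v`. -/
def fmAt (u v : List Cell) : List (List Cell) :=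
  match v with
  | Cell.F :: v' => [u ++ Cell.F :: Cell.E :: v']
  | Cell.T :: Cell.F :: v' => [u ++ Cell.F :: Cell.T :: Cell.E :: v']
  | _ => []

section Splits
open Cell

theorem tmAt_nil (v : List Cell) : tmAt [] v = [] := rfl

theorem tmAt_endT (p v : List Cell) : tmAt (p ++ [T]) v = [p ++ E :: T :: v] := by
  simp [tmAt, tmAtR]

theorem tmAt_endTF (p v : List Cell) :
    tmAt (p ++ [T, F]) v = [p ++ E :: F :: T :: v] := by
  have : (p ++ [T, F]).reverse = F :: T :: p.reverse := by simp
  rw [tmAt, this, tmAtR]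
  simp

theorem tmAt_cases {u v m : List Cell} (h : m ∈ tmAt u v) :
    (∃ p, u = p ++ [T] ∧ m = p ++ E :: T :: v) ∨
    (∃ p, u = p ++ [T, F] ∧ m = p ++ E :: F :: T :: v) := by
  rw [tmAt] at h
  rcases hrev : u.reverse with _ | ⟨e, q⟩
  · rw [hrev] at h; simp [tmAtR] at h
  · have hu : u = q.reverse ++ [e] := by
      have := congrArg List.reverse hrev; simpa using this
    rw [hrev] at h
    cases e with
    | T =>
      simp only [tmAtR, List.mem_singleton] at h
      exact Or.inl ⟨q.reverse, hu, h⟩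
    | F =>
      rcases q with _ | ⟨e', q'⟩
      · simp [tmAtR] at h
      · cases e' with
        | T =>
          simp only [tmAtR, List.mem_singleton] at h
          refine Or.inr ⟨q'.reverse, ?_, h⟩
          simpa using hu
        | F => simp [tmAtR] at h
        | E => simp [tmAtR] at h
    | E => simp [tmAtR] at h

theorem fmAt_cases {u v m : List Cell} (h : m ∈ fmAt u v) :
    (∃ v', v = F :: v' ∧ m = u ++ F :: E :: v') ∨
    (∃ v', v = T :: F :: v' ∧ m = u ++ F :: T :: E :: v') := by
  unfold fmAt at h
  split at h <;> simp_all

end Splits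
section SplitThms
open Cell

theorem toadMoves_TE (r : List Cell) :
    toadMoves (T :: E :: r) = (E :: T :: r) :: (toadMoves (E :: r)).map (T :: ·) := rfl
theorem toadMoves_TFE (r : List Cell) :
    toadMoves (T :: F :: E :: r) =
      (E :: F :: T :: r) :: (toadMoves (F :: E :: r)).map (T :: ·) := rfl
theorem toadMoves_TT (r : List Cell) :
    toadMoves (T :: T :: r) = (toadMoves (T :: r)).map (T :: ·) := rfl
theorem toadMoves_TFT (r : List Cell) :
    toadMoves (T :: F :: T :: r) = (toadMoves (F :: T :: r)).map (T :: ·) := rfl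
theorem toadMoves_TFF (r : List Cell) :
    toadMoves (T :: F :: F :: r) = (toadMoves (F :: F :: r)).map (T :: ·) := rfl
theorem toadMoves_Fc (r : List Cell) :
    toadMoves (F :: r) = (toadMoves r).map (F :: ·) := rfl
theorem toadMoves_Ec (r : List Cell) :
    toadMoves (E :: r) = (toadMoves r).map (E :: ·) := rfl

theorem frogMoves_EF (r : List Cell) :
    frogMoves (E :: F :: r) = (F :: E :: r) :: (frogMoves (F :: r)).map (E :: ·) := rfl
theorem frogMoves_ETF (r : List Cell) :
    frogMoves (E :: T :: F :: r) =
      (F :: T :: E :: r) :: (frogMoves (T :: F :: r)).map (E :: ·) := rfl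
theorem frogMoves_ETT (r : List Cell) :
    frogMoves (E :: T :: T :: r) = (frogMoves (T :: T :: r)).map (E :: ·) := rfl
theorem frogMoves_Tc (r : List Cell) :
    frogMoves (T :: r) = (frogMoves r).map (T :: ·) := rfl
theorem frogMoves_FFc (r : List Cell) :
    frogMoves (F :: r) = (frogMoves r).map (F :: ·) := rfl

theorem tmAt_cons {c : Cell} {u : List Cell} (v : List Cell)
    (h : ¬(c = T ∧ (u = [] ∨ u = [F]))) :
    tmAt (c :: u) v = (tmAt u v).map (c :: ·) := by
  rcases hrev : u.reverse with _ | ⟨e, q⟩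
  · have : u = [] := by simpa using congrArg List.reverse hrev
    subst this
    have hc : c ≠ T := fun hc => h ⟨hc, Or.inl rfl⟩
    cases c with
    | T => exact absurd rfl hc
    | F => rfl
    | E => rfl
  · have hcu : (c :: u).reverse = e :: (q ++ [c]) := by simp [hrev]
    cases e with
    | T => rw [tmAt, tmAt, hrev, hcu]; simp [tmAtR]
    | E => rw [tmAt, tmAt, hrev, hcu]; simp [tmAtR]
    | F =>
      rcases q with _ | ⟨e', q'⟩
      · have hu : u = [F] := by simpa using congrArg List.reverse hrev
        have hc : c ≠ T := fun hc => h ⟨hc, Or.inr hu⟩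
        rw [tmAt, tmAt, hrev, hcu]
        cases c with
        | T => exact absurd rfl hc
        | F => simp [tmAtR]
        | E => simp [tmAtR]
      · cases e' with
        | T => rw [tmAt, tmAt, hrev, hcu]; simp [tmAtR]
        | F => rw [tmAt, tmAt, hrev, hcu]; simp [tmAtR]
        | E => rw [tmAt, tmAt, hrev, hcu]; simp [tmAtR]

theorem toad_split : ∀ (u v : List Cell), E ∉ u → E ∉ v →
    toadMoves (u ++ E :: v) = tmAt u v := by
  intro u v hu hv
  induction u with
  | nil =>
    rw [List.nil_append, toadMoves_Ec, toad_nil hv, tmAt_nil, List.map_nil]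
  | cons c u ih =>
    have hc : c ≠ E := fun hc => hu (hc ▸ List.mem_cons_self ..)
    have hu' : E ∉ u := fun h => hu (List.mem_cons_of_mem _ h)
    have ihu := ih hu'
    rw [List.cons_append]
    cases c with
    | E => exact absurd rfl hc
    | F => rw [toadMoves_Fc, ihu, tmAt_cons (c := F) (u := u) v (by simp)]
    | T =>
      rcases u with _ | ⟨d, u'⟩
      · rw [List.nil_append, toadMoves_TE, toadMoves_Ec, toad_nil hv]
        simp [tmAt, tmAtR]
      · have hd : d ≠ E := fun h => hu' (h ▸ List.mem_cons_self ..)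
        cases d with
        | E => exact absurd rfl hd
        | T =>
          rw [List.cons_append, toadMoves_TT, ← List.cons_append, ihu,
            tmAt_cons (c := T) (u := T :: u') v (by simp)]
        | F =>
          rcases u' with _ | ⟨e, u''⟩
          · rw [List.cons_append, List.nil_append, toadMoves_TFE,
              toadMoves_Fc, toadMoves_Ec, toad_nil hv]
            rw [show tmAt [T, F] v = [[] ++ E :: F :: T :: v] from tmAt_endTF [] v]
            simp
          · have he : e ≠ E := fun h =>
              hu' (List.mem_cons_of_mem _ (h ▸ List.mem_cons_self ..))
            cases e with
            | E => exact absurd rfl he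
            | T =>
              rw [List.cons_append, List.cons_append, toadMoves_TFT,
                ← List.cons_append, ← List.cons_append, ihu,
                tmAt_cons (c := T) (u := F :: T :: u'') v (by simp)]
            | F =>
              rw [List.cons_append, List.cons_append, toadMoves_TFF,
                ← List.cons_append, ← List.cons_append, ihu,
                tmAt_cons (c := T) (u := F :: F :: u'') v (by simp)]

theorem frog_split : ∀ (u v : List Cell), E ∉ u → E ∉ v →
    frogMoves (u ++ E :: v) = fmAt u v := by
  intro u v hu hv
  induction u with
  | nil =>
    rw [List.nil_append]
    rcases v with _ | ⟨d, v'⟩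
    · rfl
    · have hd : d ≠ E := fun h => hv (h ▸ List.mem_cons_self ..)
      cases d with
      | E => exact absurd rfl hd
      | F =>
        rw [frogMoves_EF, frog_nil (l := F :: v') (by simpa using hv)]
        rfl
      | T =>
        rcases v' with _ | ⟨e, v''⟩
        · rfl
        · have he : e ≠ E := fun h =>
            hv (List.mem_cons_of_mem _ (h ▸ List.mem_cons_self ..))
          cases e with
          | E => exact absurd rfl he
          | F =>
            rw [frogMoves_ETF, frog_nil (l := T :: F :: v'') (by simpa using hv)]
            rfl
          | T =>
            rw [frogMoves_ETT, frog_nil (l := T :: T :: v'') (by simpa using hv)]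
            rfl
  | cons c u ih =>
    have hc : c ≠ E := fun hc => hu (hc ▸ List.mem_cons_self ..)
    have hu' : E ∉ u := fun h => hu (List.mem_cons_of_mem _ h)
    have step : frogMoves (c :: (u ++ E :: v)) =
        (frogMoves (u ++ E :: v)).map (c :: ·) := by
      cases c with
      | T => rfl
      | F => rfl
      | E => exact absurd rfl hc
    rw [List.cons_append, step, ih hu']
    rcases v with _ | ⟨d, v'⟩
    · rfl
    · cases d with
      | F => rfl
      | E => rfl
      | T =>
        rcases v' with _ | ⟨e, v''⟩
        · rfl
        · cases e <;> rfl

end SplitThms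
section Wt
open Cell

theorem toadMoves_Tnil : toadMoves [T] = [] := rfl
theorem toadMoves_TFnil : toadMoves [T, F] = ([] : List (List Cell)) := by
  rfl

theorem toad_spec : ∀ {l m : List Cell}, m ∈ toadMoves l →
    m.length = l.length ∧ m.countP (· = Cell.F) = l.countP (· = Cell.F) ∧
      wt m < wt l := by
  intro l
  induction l with
  | nil => intro m hm; simp [toadMoves] at hm
  | cons c r ih =>
    intro m hm
    have mapc : ∀ m₀, m₀ ∈ (toadMoves r).map (c :: ·) →
        m₀.length = (c :: r).length ∧
        m₀.countP (· = Cell.F) = (c :: r).countP (· = Cell.F) ∧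
        wt m₀ < wt (c :: r) := by
      intro m₀ h
      obtain ⟨m', h', rfl⟩ := List.mem_map.1 h
      obtain ⟨h1, h2, h3⟩ := ih h'
      refine ⟨by simp [h1], by simp [List.countP_cons, h2], ?_⟩
      simp only [wt, h1, h2]
      omega
    cases c with
    | F => exact mapc m (by rwa [toadMoves_Fc] at hm)
    | E => exact mapc m (by rwa [toadMoves_Ec] at hm)
    | T =>
      rcases r with _ | ⟨d, r'⟩
      · rw [toadMoves_Tnil] at hm; simp at hm
      · cases d with
        | T => exact mapc m (by rwa [toadMoves_TT] at hm)
        | E =>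
          rw [toadMoves_TE, List.mem_cons] at hm
          rcases hm with rfl | hm
          · refine ⟨by simp, by simp [List.countP_cons], ?_⟩
            simp [wt, List.countP_cons]
            try omega
          · exact mapc m hm
        | F =>
          rcases r' with _ | ⟨e, r''⟩
          · rw [toadMoves_TFnil] at hm; simp at hm
          · cases e with
            | T => exact mapc m (by rwa [toadMoves_TFT] at hm)
            | F => exact mapc m (by rwa [toadMoves_TFF] at hm)
            | E =>
              rw [toadMoves_TFE, List.mem_cons] at hm
              rcases hm with rfl | hm
              · refine ⟨by simp, by simp [List.countP_cons], ?_⟩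
                simp [wt, List.countP_cons]
                try omega
              · exact mapc m hm

theorem frogMoves_Enil : frogMoves [E] = [] := rfl
theorem frogMoves_ETnil : frogMoves [E, T] = ([] : List (List Cell)) := by rfl

theorem frog_spec : ∀ {l m : List Cell}, m ∈ frogMoves l →
    m.length = l.length ∧ m.countP (· = Cell.F) = l.countP (· = Cell.F) ∧
      wt m < wt l := by
  intro l
  induction l with
  | nil => intro m hm; simp [frogMoves] at hm
  | cons c r ih =>
    intro m hm
    have mapc : ∀ m₀, m₀ ∈ (frogMoves r).map (c :: ·) →
        m₀.length = (c :: r).length ∧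
        m₀.countP (· = Cell.F) = (c :: r).countP (· = Cell.F) ∧
        wt m₀ < wt (c :: r) := by
      intro m₀ h
      obtain ⟨m', h', rfl⟩ := List.mem_map.1 h
      obtain ⟨h1, h2, h3⟩ := ih h'
      refine ⟨by simp [h1], by simp [List.countP_cons, h2], ?_⟩
      simp only [wt, h1, h2]
      omega
    cases c with
    | F => exact mapc m (by rwa [frogMoves_FFc] at hm)
    | T => exact mapc m (by rwa [frogMoves_Tc] at hm)
    | E =>
      rcases r with _ | ⟨d, r'⟩
      · rw [frogMoves_Enil] at hm; simp at hm
      · cases d with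
        | E => exact mapc m (by rwa [show frogMoves (E::E::r') =
            (frogMoves (E::r')).map (E::·) from rfl] at hm)
        | F =>
          rw [frogMoves_EF, List.mem_cons] at hm
          rcases hm with rfl | hm
          · refine ⟨by simp, by simp [List.countP_cons], ?_⟩
            simp [wt, List.countP_cons]
            try omega
          · exact mapc m hm
        | T =>
          rcases r' with _ | ⟨e, r''⟩
          · rw [frogMoves_ETnil] at hm; simp at hm
          · cases e with
            | T => exact mapc m (by rwa [frogMoves_ETT] at hm)
            | E => exact mapc m (by rwa [show frogMoves (E::T::E::r'') =
                (frogMoves (T::E::r'')).map (E::·) from rfl] at hm)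
            | F =>
              rw [frogMoves_ETF, List.mem_cons] at hm
              rcases hm with rfl | hm
              · refine ⟨by simp, by simp [List.countP_cons], ?_⟩
                simp [wt, List.countP_cons]
                try omega
              · exact mapc m hm

theorem gameAux_congr : ∀ (k : ℕ) (l : List Cell) (m n : ℕ), wt l ≤ k →
    wt l ≤ m → wt l ≤ n → gameAux (m + 1) l = gameAux (n + 1) l := by
  intro k
  induction k using Nat.strong_induction_on with
  | _ k ih =>
    intro l m n hk hm hn
    rw [gameAux, gameAux]
    congr 1
    · funext i
      have hi := (toad_spec i.2).2.2
      have hm1 : m - 1 + 1 = m := by omega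
      have hn1 : n - 1 + 1 = n := by omega
      rw [← hm1, ← hn1]
      exact ih (wt i.1) (by omega) i.1 _ _ le_rfl (by omega) (by omega)
    · funext i
      have hi := (frog_spec i.2).2.2
      have hm1 : m - 1 + 1 = m := by omega
      have hn1 : n - 1 + 1 = n := by omega
      rw [← hm1, ← hn1]
      exact ih (wt i.1) (by omega) i.1 _ _ le_rfl (by omega) (by omega)

theorem tfGame_eq (l : List Cell) : tfGame l =
    PGame.mk {m // m ∈ toadMoves l} {m // m ∈ frogMoves l}
      (fun m => tfGame m.1) (fun m => tfGame m.1) := by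
  rw [tfGame, gameAux]
  congr 1
  · funext i
    have hi := (toad_spec i.2).2.2
    show gameAux (wt l) i.1 = tfGame i.1
    have h1 : wt l - 1 + 1 = wt l := by omega
    rw [← h1, tfGame]
    exact gameAux_congr (wt i.1) i.1 _ _ le_rfl (by omega) le_rfl
  · funext i
    have hi := (frog_spec i.2).2.2
    show gameAux (wt l) i.1 = tfGame i.1
    have h1 : wt l - 1 + 1 = wt l := by omega
    rw [← h1, tfGame]
    exact gameAux_congr (wt i.1) i.1 _ _ le_rfl (by omega) le_rfl

end Wt
section GameHelpers
open Cell PGame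

theorem tf_equiv_gmk {l x y : List Cell} {X Y : PGame}
    (hT : toadMoves l = [x]) (hF : frogMoves l = [y])
    (hX : tfGame x ≈ X) (hY : tfGame y ≈ Y) : tfGame l ≈ gmk X Y := by
  rw [tfGame_eq l]
  apply PGame.Equiv.of_exists
  · intro i
    obtain ⟨m, hm⟩ := i
    rw [hT, List.mem_singleton] at hm
    subst hm
    exact ⟨PUnit.unit, hX⟩
  · intro i
    obtain ⟨m, hm⟩ := i
    rw [hF, List.mem_singleton] at hm
    subst hm
    exact ⟨PUnit.unit, hY⟩
  · intro _
    exact ⟨⟨x, by simp [hT]⟩, hX⟩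
  · intro _
    exact ⟨⟨y, by simp [hF]⟩, hY⟩

/-- The Death Leap Principle: a one-blank position in which neither player can
slide has value `0`. -/
theorem dead_aux : ∀ (k : ℕ) (u v : List Cell), wt (u ++ E :: v) ≤ k →
    E ∉ u → E ∉ v → u.getLast? ≠ some T → v.head? ≠ some F →
    tfGame (u ++ E :: v) ≈ 0 := by
  intro k
  induction k using Nat.strong_induction_on with
  | _ k ih =>
  intro u v hw hu hv hlast hhead
  constructor
  · rw [tfGame_eq, PGame.le_zero]
    intro i
    obtain ⟨m0, hi0⟩ := i
    have hi := hi0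
    rw [toad_split u v hu hv] at hi
    show ∃ j, (tfGame m0).moveRight j ≤ 0
    rcases tmAt_cases hi with ⟨p, hp, hm⟩ | ⟨p, hp, hm⟩
    · exact absurd (by rw [hp]; exact List.getLast?_concat) hlast
    · have hpE : E ∉ p := fun h => hu (hp ▸ List.mem_append_left _ h)
      have hvE : E ∉ (F :: T :: v : List Cell) := by simpa using hv
      have hwm : wt m0 < wt (u ++ E :: v) := (toad_spec hi0).2.2
      subst hm
      have hfm : frogMoves (p ++ E :: F :: T :: v) = [p ++ F :: E :: T :: v] := by
        rw [frog_split p (F :: T :: v) hpE hvE]; rfl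
      rw [tfGame_eq]
      refine ⟨⟨p ++ F :: E :: T :: v, by rw [hfm]; exact List.mem_singleton_self _⟩, ?_⟩
      show tfGame (p ++ F :: E :: T :: v) ≤ 0
      have h1 : wt (p ++ F :: E :: T :: v) < wt (p ++ E :: F :: T :: v) :=
        (frog_spec (by rw [hfm]; exact List.mem_singleton_self _)).2.2
      have heq : p ++ F :: E :: T :: v = (p ++ [F]) ++ E :: T :: v := by simp
      rw [heq]
      refine (ih (wt ((p ++ [F]) ++ E :: T :: v)) ?_ _ _ le_rfl ?_ ?_ ?_ ?_).1
      · rw [← heq]; omega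
      · simp [hpE]
      · simpa using hv
      · rw [List.getLast?_concat]; simp
      · simp
  · rw [tfGame_eq, PGame.zero_le]
    intro j
    obtain ⟨m0, hj0⟩ := j
    have hj := hj0
    rw [frog_split u v hu hv] at hj
    show ∃ i, 0 ≤ (tfGame m0).moveLeft i
    rcases fmAt_cases hj with ⟨v', hv', hm⟩ | ⟨v', hv', hm⟩
    · exact absurd (by rw [hv']; rfl) hhead
    · have hv'E : E ∉ v' := fun h => hv (hv' ▸ by simp [h])
      have huE : E ∉ u ++ [F, T] := by simp [hu]
      have hwm : wt m0 < wt (u ++ E :: v) := (frog_spec hj0).2.2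
      subst hm
      have heqm : u ++ F :: T :: E :: v' = (u ++ [F, T]) ++ E :: v' := by simp
      have htm : toadMoves (u ++ F :: T :: E :: v') = [(u ++ [F]) ++ E :: T :: v'] := by
        rw [heqm, toad_split _ v' huE hv'E,
          show u ++ [F, T] = (u ++ [F]) ++ [T] by simp, tmAt_endT]
      rw [tfGame_eq]
      refine ⟨⟨(u ++ [F]) ++ E :: T :: v', by rw [htm]; exact List.mem_singleton_self _⟩, ?_⟩
      show (0 : PGame) ≤ tfGame ((u ++ [F]) ++ E :: T :: v')
      have h1 : wt ((u ++ [F]) ++ E :: T :: v') < wt (u ++ F :: T :: E :: v') :=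
        (toad_spec (by rw [htm]; exact List.mem_singleton_self _)).2.2
      refine (ih (wt ((u ++ [F]) ++ E :: T :: v')) (by omega) _ _ le_rfl ?_ ?_ ?_ ?_).2
      · simp [hu]
      · simpa using hv'E
      · rw [List.getLast?_concat]; simp
      · simp

theorem dead {u v : List Cell} (hu : E ∉ u) (hv : E ∉ v)
    (hlast : u.getLast? ≠ some T) (hhead : v.head? ≠ some F) :
    tfGame (u ++ E :: v) ≈ 0 :=
  dead_aux (wt (u ++ E :: v)) u v le_rfl hu hv hlast hhead

end GameHelpers
section Trail
open Cell PGame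

/-- Number of trailing toads. -/
def trailT (l : List Cell) : ℕ := (l.reverse.takeWhile (fun c => decide (c = T))).length

theorem trailT_concat_T (p : List Cell) : trailT (p ++ [T]) = trailT p + 1 := by
  simp [trailT]

theorem trailT_concat_F (p : List Cell) : trailT (p ++ [F]) = 0 := by
  simp [trailT]

theorem trailT_decomp {u : List Cell} {n : ℕ} (h : trailT u = n + 1) :
    ∃ p, u = p ++ [T] ∧ trailT p = n := by
  rcases hrev : u.reverse with _ | ⟨e, q⟩
  · rw [trailT, hrev] at h; simp at h
  · have hu : u = q.reverse ++ [e] := by simpa using congrArg List.reverse hrev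
    cases e with
    | T =>
      refine ⟨q.reverse, hu, ?_⟩
      rw [trailT, hrev] at h
      rw [trailT]
      simpa using h
    | F => rw [trailT, hrev] at h; simp at h
    | E => rw [trailT, hrev] at h; simp at h

/-- The right side of the blank never offers Right a move. -/
def rB (v : List Cell) : Prop := v = [] ∨ v = [T] ∨ ∃ v', v = T :: T :: v'

theorem rB_cons {v : List Cell} (h : rB v) : rB (T :: v) := by
  rcases h with rfl | rfl | ⟨v', rfl⟩
  · exact Or.inr (Or.inl rfl)
  · exact Or.inr (Or.inr ⟨[], rfl⟩)
  · exact Or.inr (Or.inr ⟨T :: v', rfl⟩)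

theorem rB_fmAt {v : List Cell} (u : List Cell) (h : rB v) : fmAt u v = [] := by
  rcases h with rfl | rfl | ⟨v', rfl⟩ <;> rfl

theorem natGame_succ (n : ℕ) :
    natGame (n + 1) = PGame.mk PUnit PEmpty (fun _ => natGame n) (fun x => x.elim) := by
  rw [natGame]

def natGame_no_right {C : Sort _} (n : ℕ) (j : (natGame n).RightMoves) : C := by
  cases n with
  | zero => exact (j : PEmpty).elim
  | succ n => exact (j : PEmpty).elim

theorem natGame_lf_succ (n : ℕ) : natGame n ⧏ natGame (n + 1) := by
  apply PGame.lf_iff_exists_le.2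
  left
  rw [natGame_succ]
  exact ⟨PUnit.unit, PGame.pg_le_refl _⟩

theorem trail_aux : ∀ (k : ℕ) (u v : List Cell), wt (u ++ E :: v) ≤ k →
    E ∉ u → E ∉ v → rB v → tfGame (u ++ E :: v) ≈ natGame (trailT u) := by
  intro k
  induction k using Nat.strong_induction_on with
  | _ k ih =>
  intro u v hw hu hv hrB
  have hnofrog : frogMoves (u ++ E :: v) = [] := by
    rw [frog_split u v hu hv, rB_fmAt u hrB]
  constructor
  · rw [tfGame_eq, PGame.le_iff_forall_lf]
    constructor
    · intro i
      obtain ⟨m0, hi0⟩ := i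
      have hi := hi0
      rw [toad_split u v hu hv] at hi
      show tfGame m0 ⧏ natGame (trailT u)
      have hwm : wt m0 < wt (u ++ E :: v) := (toad_spec hi0).2.2
      rcases tmAt_cases hi with ⟨p, hp, hm⟩ | ⟨p, hp, hm⟩
      · -- slide
        subst hm
        have hpE : E ∉ p := fun h => hu (hp ▸ List.mem_append_left _ h)
        have hIH : tfGame (p ++ E :: T :: v) ≈ natGame (trailT p) :=
          ih (wt (p ++ E :: T :: v)) (by omega) p (T :: v) le_rfl hpE
            (by simpa using hv) (rB_cons hrB)
        rw [show trailT u = trailT p + 1 by rw [hp, trailT_concat_T]]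
        exact PGame.lf_iff_exists_le.2 (Or.inl ⟨PUnit.unit, hIH.1⟩)
      · -- jump
        subst hm
        have hpE : E ∉ p := fun h => hu (hp ▸ List.mem_append_left _ h)
        rw [show trailT u = 0 by
          rw [hp, show p ++ [T, F] = (p ++ [T]) ++ [F] by simp, trailT_concat_F]]
        apply PGame.lf_iff_exists_le.2
        right
        have hfm : frogMoves (p ++ E :: F :: T :: v) = [p ++ F :: E :: T :: v] := by
          rw [frog_split p (F :: T :: v) hpE (by simpa using hv)]; rfl
        rw [tfGame_eq]
        refine ⟨⟨p ++ F :: E :: T :: v, by rw [hfm]; exact List.mem_singleton_self _⟩, ?_⟩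
        show tfGame (p ++ F :: E :: T :: v) ≤ natGame 0
        have h1 : wt (p ++ F :: E :: T :: v) < wt (p ++ E :: F :: T :: v) :=
          (frog_spec (by rw [hfm]; exact List.mem_singleton_self _)).2.2
        have heq : p ++ F :: E :: T :: v = (p ++ [F]) ++ E :: T :: v := by simp
        rw [heq]
        have hIH : tfGame ((p ++ [F]) ++ E :: T :: v) ≈ natGame (trailT (p ++ [F])) :=
          ih (wt ((p ++ [F]) ++ E :: T :: v)) (by rw [← heq]; omega) _ (T :: v) le_rfl
            (by simp [hpE]) (by simpa using hv) (rB_cons hrB)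
        rw [trailT_concat_F] at hIH
        exact hIH.1
    · intro j
      exact natGame_no_right _ j
  · rw [tfGame_eq, PGame.le_iff_forall_lf]
    constructor
    · intro i
      revert i
      rcases hn : trailT u with _ | t
      · intro i
        exact (i : PEmpty).elim
      · obtain ⟨p, hp, hpt⟩ := trailT_decomp hn
        have hpE : E ∉ p := fun h => hu (hp ▸ List.mem_append_left _ h)
        have hmem : p ++ E :: T :: v ∈ toadMoves (u ++ E :: v) := by
          rw [toad_split u v hu hv, hp, tmAt_endT]
          exact List.mem_singleton_self _
        have hwm : wt (p ++ E :: T :: v) < wt (u ++ E :: v) := (toad_spec hmem).2.2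
        have hIH : tfGame (p ++ E :: T :: v) ≈ natGame (trailT p) :=
          ih (wt (p ++ E :: T :: v)) (by omega) p (T :: v) le_rfl hpE
            (by simpa using hv) (rB_cons hrB)
        rw [hpt] at hIH
        intro i
        apply PGame.lf_iff_exists_le.2
        left
        refine ⟨⟨p ++ E :: T :: v, hmem⟩, ?_⟩
        show natGame t ≤ tfGame (p ++ E :: T :: v)
        exact hIH.2
    · intro j
      obtain ⟨m0, hj0⟩ := j
      rw [hnofrog] at hj0
      exact absurd hj0 List.not_mem_nil

theorem trail {u v : List Cell} (hu : E ∉ u) (hv : E ∉ v) (hrB : rB v) :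
    tfGame (u ++ E :: v) ≈ natGame (trailT u) :=
  trail_aux (wt (u ++ E :: v)) u v le_rfl hu hv hrB

end Trail
section Chain
open Cell PGame

theorem tfBlock_zero : tfBlock 0 = [] := rfl

theorem tfBlock_succ (k : ℕ) : tfBlock (k + 1) = T :: F :: tfBlock k := by
  simp [tfBlock, List.replicate_succ]

theorem tfBlock_succ' (k : ℕ) : tfBlock (k + 1) = tfBlock k ++ [T, F] := by
  simp [tfBlock, List.replicate_succ']

theorem tfBlock_noE (k : ℕ) : E ∉ tfBlock k := by
  induction k with
  | zero => simp [tfBlock_zero]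
  | succ k ih => simp [tfBlock_succ, ih]

theorem repF_noE (n : ℕ) : E ∉ List.replicate n F := by
  simp [List.mem_replicate]

theorem repT_noE (n : ℕ) : E ∉ List.replicate n T := by
  simp [List.mem_replicate]

theorem lemD : ∀ (k : ℕ) (P : List Cell), E ∉ P → P.getLast? = some F →
    ∀ (c : ℕ), 1 ≤ c → ∀ (R : List Cell), E ∉ R →
    tfGame (P ++ [T, E] ++ tfBlock k ++ [T] ++ List.replicate c F ++ R) ≈
      (fun x => gmk 0 x)^[k + 1]
        (tfGame (P ++ tfBlock k ++ [T, F, T, E] ++ List.replicate (c - 1) F ++ R)) := by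
  intro k
  induction k with
  | zero =>
    intro P hPE hPF c hc R hRE
    obtain ⟨c', rfl⟩ : ∃ c', c = c' + 1 := ⟨c - 1, by omega⟩
    have hvE : E ∉ (T :: F :: (List.replicate c' F ++ R) : List Cell) := by
      simp [hRE, List.mem_replicate]
    have hl : P ++ [T, E] ++ tfBlock 0 ++ [T] ++ List.replicate (c' + 1) F ++ R
        = (P ++ [T]) ++ E :: (T :: F :: (List.replicate c' F ++ R)) := by
      simp [tfBlock_zero, List.replicate_succ]
    rw [hl, Function.iterate_one]
    refine tf_equiv_gmk (x := P ++ E :: T :: T :: F :: (List.replicate c' F ++ R))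
      (y := (P ++ [T]) ++ F :: T :: E :: (List.replicate c' F ++ R)) ?_ ?_ ?_ ?_
    · rw [toad_split _ _ (by simp [hPE]) hvE, tmAt_endT]
    · rw [frog_split _ _ (by simp [hPE]) hvE]; rfl
    · exact dead hPE (by simpa using hvE) (by rw [hPF]; simp) (by simp)
    · have e2 : (P ++ [T]) ++ F :: T :: E :: (List.replicate c' F ++ R)
          = P ++ tfBlock 0 ++ [T, F, T, E] ++ List.replicate (c' + 1 - 1) F ++ R := by
        simp [tfBlock_zero]
      exact e2 ▸ PGame.equiv_rfl
  | succ k ihk =>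
    intro P hPE hPF c hc R hRE
    have hwE : E ∉ tfBlock k ++ [T] ++ List.replicate c F ++ R := by
      simp [hRE, List.mem_replicate, tfBlock_noE]
    have hvE : E ∉ (T :: F :: (tfBlock k ++ [T] ++ List.replicate c F ++ R) : List Cell) := by
      simpa using hwE
    have hl : P ++ [T, E] ++ tfBlock (k + 1) ++ [T] ++ List.replicate c F ++ R
        = (P ++ [T]) ++ E :: (T :: F :: (tfBlock k ++ [T] ++ List.replicate c F ++ R)) := by
      simp [tfBlock_succ]
    rw [hl, Function.iterate_succ_apply']
    refine tf_equiv_gmk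
      (x := P ++ E :: T :: T :: F :: (tfBlock k ++ [T] ++ List.replicate c F ++ R))
      (y := (P ++ [T]) ++ F :: T :: E :: (tfBlock k ++ [T] ++ List.replicate c F ++ R)) ?_ ?_ ?_ ?_
    · rw [toad_split _ _ (by simp [hPE]) hvE, tmAt_endT]
    · rw [frog_split _ _ (by simp [hPE]) hvE]; rfl
    · exact dead hPE (by simpa using hvE) (by rw [hPF]; simp) (by simp)
    · have h1 := ihk (P ++ [T, F]) (by simp [hPE])
        (by rw [show P ++ [T, F] = (P ++ [T]) ++ [F] by simp, List.getLast?_concat])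
        c hc R hRE
      have e1 : (P ++ [T]) ++ F :: T :: E :: (tfBlock k ++ [T] ++ List.replicate c F ++ R)
          = (P ++ [T, F]) ++ [T, E] ++ tfBlock k ++ [T] ++ List.replicate c F ++ R := by
        simp
      have e2 : (P ++ [T, F]) ++ tfBlock k ++ [T, F, T, E] ++ List.replicate (c - 1) F ++ R
          = P ++ tfBlock (k + 1) ++ [T, F, T, E] ++ List.replicate (c - 1) F ++ R := by
        simp [tfBlock_succ]
      rw [e1]
      exact e2 ▸ h1

end Chain
section Main
open Cell PGame

theorem trailT_eq_zero {L : List Cell} (h : L.getLast? = some F) : trailT L = 0 := by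
  rcases hrev : L.reverse with _ | ⟨e, q⟩
  · simp [trailT, hrev]
  · have : L.reverse.head? = some F := by rw [List.head?_reverse]; exact h
    rw [hrev] at this
    simp only [List.head?_cons, Option.some.injEq] at this
    subst this
    simp [trailT, hrev]

theorem trailT_L (L : List Cell) (h : L.getLast? = some F) (n : ℕ) :
    trailT (L ++ List.replicate n T) = n := by
  induction n with
  | zero => simpa using trailT_eq_zero h
  | succ n ih =>
    rw [List.replicate_succ', ← List.append_assoc, trailT_concat_T, ih]

theorem intGame_natCast (n : ℕ) : intGame (n : ℤ) = natGame n := rfl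

theorem main_thm (a b c : ℕ) (ha : 2 ≤ a) (hc : 2 ≤ c)
    (L R : List Cell) (hLE : Cell.E ∉ L) (hRE : Cell.E ∉ R)
    (hL : L.getLast? = some Cell.F) (hR : R.head? = some Cell.T) :
    tfGame (L ++ List.replicate a Cell.T ++ [Cell.E, Cell.F] ++ tfBlock b ++
        [Cell.T] ++ List.replicate c Cell.F ++ R) ≈
      gmk
        (gmk (intGame ((a : ℤ) - 2))
          ((fun x => gmk 0 x)^[b + 1]
            (tfGame (L ++ List.replicate (a - 1) Cell.T ++ [Cell.F] ++
              tfBlock (b + 1) ++ [Cell.T, Cell.E] ++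
              List.replicate (c - 1) Cell.F ++ R))))
        0 := by
  obtain ⟨a2, rfl⟩ : ∃ a2, a = a2 + 2 := ⟨a - 2, by omega⟩
  obtain ⟨c2, rfl⟩ : ∃ c2, c = c2 + 2 := ⟨c - 2, by omega⟩
  simp only [Nat.add_sub_cancel, show a2 + 2 - 1 = a2 + 1 from rfl,
    show c2 + 2 - 1 = c2 + 1 from rfl]
  set w : List Cell := tfBlock b ++ [T] ++ List.replicate (c2 + 2) F ++ R with hw
  have hwE : E ∉ w := by
    simp [hw, hRE, List.mem_replicate, tfBlock_noE]
  have hwhead : w.head? = some T := by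
    cases b <;> simp [hw, tfBlock_zero, tfBlock_succ]
  -- rewrite the position into `u ++ E :: v` form
  have hl : L ++ List.replicate (a2 + 2) T ++ [E, F] ++ tfBlock b ++ [T] ++
      List.replicate (c2 + 2) F ++ R
      = (L ++ List.replicate (a2 + 2) T) ++ E :: F :: w := by
    simp [hw]
  rw [hl]
  have huE : E ∉ L ++ List.replicate (a2 + 2) T := by
    simp [hLE, List.mem_replicate]
  have hvE : E ∉ (F :: w : List Cell) := by simpa using hwE
  refine tf_equiv_gmk
    (x := (L ++ List.replicate (a2 + 1) T) ++ E :: T :: F :: w)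
    (y := (L ++ List.replicate (a2 + 2) T) ++ F :: E :: w) ?_ ?_ ?_ ?_
  · rw [toad_split _ _ huE hvE,
      show L ++ List.replicate (a2 + 2) T = (L ++ List.replicate (a2 + 1) T) ++ [T] by
        rw [List.replicate_succ' (n := a2 + 1), ← List.append_assoc],
      tmAt_endT]
  · rw [frog_split _ _ huE hvE]; rfl
  · -- the Left option A
    have huE' : E ∉ L ++ List.replicate (a2 + 1) T := by
      simp [hLE, List.mem_replicate]
    have hvE' : E ∉ (T :: F :: w : List Cell) := by simpa using hwE
    refine tf_equiv_gmk
      (x := (L ++ List.replicate a2 T) ++ E :: T :: T :: F :: w)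
      (y := (L ++ List.replicate (a2 + 1) T) ++ F :: T :: E :: w) ?_ ?_ ?_ ?_
    · rw [toad_split _ _ huE' hvE',
        show L ++ List.replicate (a2 + 1) T = (L ++ List.replicate a2 T) ++ [T] by
          rw [List.replicate_succ' (n := a2), ← List.append_assoc],
        tmAt_endT]
    · rw [frog_split _ _ huE' hvE']; rfl
    · -- slide option: integer a2
      have htr : tfGame ((L ++ List.replicate a2 T) ++ E :: T :: T :: F :: w) ≈
          natGame (trailT (L ++ List.replicate a2 T)) :=
        trail (by simp [hLE, List.mem_replicate]) (by simpa using hwE)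
          (Or.inr (Or.inr ⟨F :: w, rfl⟩))
      rw [trailT_L L hL a2] at htr
      have hint : ((a2 + 2 : ℕ) : ℤ) - 2 = ((a2 : ℕ) : ℤ) := by push_cast; ring
      rw [hint, intGame_natCast]
      exact htr
    · -- jump option: Lemma D chain
      have hP : (L ++ List.replicate (a2 + 1) T ++ [F]).getLast? = some F :=
        List.getLast?_concat
      have h1 := lemD b (L ++ List.replicate (a2 + 1) T ++ [F])
        (by simp [hLE, List.mem_replicate]) hP (c2 + 2) (by omega) R hRE
      have e1 : (L ++ List.replicate (a2 + 1) T) ++ F :: T :: E :: w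
          = (L ++ List.replicate (a2 + 1) T ++ [F]) ++ [T, E] ++ tfBlock b ++ [T] ++
            List.replicate (c2 + 2) F ++ R := by
        simp [hw]
      have e2 : (L ++ List.replicate (a2 + 1) T ++ [F]) ++ tfBlock b ++ [T, F, T, E] ++
            List.replicate (c2 + 2 - 1) F ++ R
          = L ++ List.replicate (a2 + 1) T ++ [F] ++ tfBlock (b + 1) ++ [T, E] ++
            List.replicate (c2 + 1) F ++ R := by
        simp [tfBlock_succ']
      rw [e1]
      exact e2 ▸ h1
  · -- the Right option B is dead
    have e3 : (L ++ List.replicate (a2 + 2) T) ++ F :: E :: w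
        = (L ++ List.replicate (a2 + 2) T ++ [F]) ++ E :: w := by simp
    rw [e3]
    refine dead (by simp [hLE, List.mem_replicate]) hwE ?_ ?_
    · rw [List.getLast?_concat]; simp
    · rw [hwhead]; simp

end Main
/-- `L T^a □ F (TF)^b T F^c R
  = { { a-2 | O^(b+1)( L T^(a-1) F (TF)^(b+1) T □ F^(c-1) R ) } | 0 }`
for `a ≥ 2`, `b ≥ 0`, `c ≥ 2`, where `O(x) = {0 | x}`, `L` is a `{T,F}`-string
ending in `F` and `R` a `{T,F}`-string starting with `T`. -/
theorem LTaboxF_TFb_T_Fc_R (a b c : ℕ) (ha : 2 ≤ a) (hc : 2 ≤ c)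
    (L R : List Cell) (hLE : Cell.E ∉ L) (hRE : Cell.E ∉ R)
    (hL : L.getLast? = some Cell.F) (hR : R.head? = some Cell.T) :
    tfGame (L ++ List.replicate a Cell.T ++ [Cell.E, Cell.F] ++ tfBlock b ++
        [Cell.T] ++ List.replicate c Cell.F ++ R) ≈
      gmk
        (gmk (intGame ((a : ℤ) - 2))
          ((fun x => gmk 0 x)^[b + 1]
            (tfGame (L ++ List.replicate (a - 1) Cell.T ++ [Cell.F] ++
              tfBlock (b + 1) ++ [Cell.T, Cell.E] ++
              List.replicate (c - 1) Cell.F ++ R))))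
        0 := by
  exact main_thm a b c ha hc L R hLE hRE hL hR
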